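/- In the symmetric continuous EV game with B > 0, any symmetric CCE distribution L with moments (γ₁, γ₂, γ₃) satisfying γ₂ + (n−1)γ₃ ≥ n γ₁² and γ₂ + (n−1)γ₃ ≤ (1/B)((R−A)γ₁ − (1/(4B))((R−A) − B(n−1)γ₁)²) must have γ₁ = (R−A)/(B(n+1)) and γ₂ + (n−1)γ₃ = n γ₁², i.e., the mean peak-time quantity equals the Nash equilibrium quantity and Var(Z_i) + (n−1)Cov(Z_i,Z_j) = 0. -/

import Mathlib

/-- Any symmetric CCE moments `(γ₁, γ₂, γ₃)` of the symmetric continuous EV game,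
squeezed between the PSD lower bound and the best-deviation upper bound, must have
mean equal to the Nash quantity and `γ₂ + (n−1)γ₃ = n γ₁²`. -/
theorem stmt_9 (B R A : ℝ) (hB : 0 < B) (n : ℕ) (hn : 1 ≤ n)
    (γ₁ γ₂ γ₃ : ℝ)
    (hlow : n * γ₁ ^ 2 ≤ γ₂ + (n - 1 : ℝ) * γ₃)
    (hupp : γ₂ + (n - 1 : ℝ) * γ₃ ≤
      (1 / B) * ((R - A) * γ₁ - (1 / (4 * B)) * ((R - A) - B * (n - 1 : ℝ) * γ₁) ^ 2)) :
    γ₁ = (R - A) / (B * (n + 1 : ℝ)) ∧ γ₂ + (n - 1 : ℝ) * γ₃ = n * γ₁ ^ 2 := by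
  have hB' : B ≠ 0 := ne_of_gt hB
  have hB2 : (0:ℝ) < 4 * B ^ 2 := by positivity
  have e : (1 / B) * ((R - A) * γ₁ - (1 / (4 * B)) * ((R - A) - B * (n - 1 : ℝ) * γ₁) ^ 2)
      = (4 * B * ((R - A) * γ₁) - ((R - A) - B * (n - 1 : ℝ) * γ₁) ^ 2) / (4 * B ^ 2) := by
    field_simp
  have h := hlow.trans hupp
  rw [e, le_div_iff₀ hB2] at h
  have key : ((R - A) - B * (n + 1 : ℝ) * γ₁) ^ 2 = 0 := by
    nlinarith [sq_nonneg ((R - A) - B * (n + 1 : ℝ) * γ₁)]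
  have key' : (R - A) = B * (n + 1 : ℝ) * γ₁ := by
    have := pow_eq_zero_iff (n := 2) (by norm_num) |>.mp key
    linarith
  have hBn : B * ((n:ℝ) + 1) ≠ 0 := by positivity
  constructor
  · field_simp [key']
    linarith
  · have heq : (4 * B * ((R - A) * γ₁) - ((R - A) - B * (n - 1 : ℝ) * γ₁) ^ 2)
        = n * γ₁ ^ 2 * (4 * B ^ 2) := by
      rw [key']; ring
    have hupp' := hupp
    rw [e, heq, mul_div_assoc, div_self (ne_of_gt hB2), mul_one] at hupp'
    linarith
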